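/- Consider the Bayesian game setup and fix a player i. Suppose Assumptions 3.1 and 3.2 hold and the conditions of Proposition 3.1 hold (so that ∇_{a_i}ϑ_i(a_i, f_{-i}, ·) is Lipschitz on Θ_i with modulus κ_i, uniformly in a_i and f_{-i}). Then for every measurable rivals' strategy profile f_{-i} and every θ_i ∈ Θ_i, the optimal response 𝒜*_i(f_{-i}, θ_i) := argmax_{a_i∈𝒜_i} ϑ_i(a_i, f_{-i}, θ_i) is a singleton, and it is Lipschitz in the own type: ‖𝒜*_i(f_{-i}, θ'_i) − 𝒜*_i(f_{-i}, θ''_i)‖ ≤ (κ_i/σ_i)‖θ'_i − θ''_i‖ for all θ'_i, θ''_i ∈ Θ_i. -/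

import Mathlib

open MeasureTheory
open scoped InnerProductSpace ENNReal NNReal

noncomputable section

/-- The type space of player `i` : a subset of `ℝ^{d_i}` with the Euclidean norm. -/
abbrev Ty (n : ℕ) (d : Fin n → ℕ) (i : Fin n) : Type := EuclideanSpace ℝ (Fin (d i))

/-- The action space of player `i` : a subset of `ℝ^{z_i}` with the Euclidean norm. -/
abbrev Ac (n : ℕ) (z : Fin n → ℕ) (i : Fin n) : Type := EuclideanSpace ℝ (Fin (z i))

/-- The space `Θ_{-i}` of type profiles of the rivals of player `i`,
equipped with the Euclidean (`ℓ²`) norm. -/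
abbrev Rv (n : ℕ) (d : Fin n → ℕ) (i : Fin n) : Type :=
  PiLp 2 (fun j : {j : Fin n // j ≠ i} => EuclideanSpace ℝ (Fin (d j.val)))

/-- The space `𝒜_{-i}` of action profiles of the rivals of player `i`. -/
abbrev RvA (n : ℕ) (z : Fin n → ℕ) (i : Fin n) : Type :=
  ∀ j : {j : Fin n // j ≠ i}, EuclideanSpace ℝ (Fin (z j.val))

instance (n : ℕ) (d : Fin n → ℕ) (i : Fin n) : MeasureSpace (Rv n d i) :=
  { volume := Measure.map (WithLp.toLp 2)
      (volume : Measure (∀ j : {j : Fin n // j ≠ i}, EuclideanSpace ℝ (Fin (d j.val)))) }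

/-- The rivals' actions `f_{-i}(θ_{-i})` induced by a strategy profile `f`. -/
def rivalsAct (n : ℕ) (d z : Fin n → ℕ) (i : Fin n)
    (f : ∀ j, Ty n d j → Ac n z j) (t : Rv n d i) : RvA n z i :=
  fun j => f j.val (t j)

/-- `f` is a strategy profile: each `f_j : Θ_j → 𝒜_j` is measurable. -/
def IsStrat (n : ℕ) (d z : Fin n → ℕ) (Θ : ∀ j, Set (Ty n d j))
    (𝒜 : ∀ j, Set (Ac n z j)) (f : ∀ j, Ty n d j → Ac n z j) : Prop :=
  ∀ j, Measurable (f j) ∧ Set.MapsTo (f j) (Θ j) (𝒜 j)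

/-- The expected utility `ϑ_i(a_i, f_{-i}, θ_i)` of player `i`, the expectation
being taken with respect to the conditional distribution `η_i(·|θ_i)` of `θ_{-i}`. -/
def vth (n : ℕ) (d z : Fin n → ℕ) (i : Fin n)
    (u : Ac n z i → RvA n z i → Ty n d i → Rv n d i → ℝ)
    (cond : Ty n d i → Measure (Rv n d i))
    (a : Ac n z i) (f : ∀ j, Ty n d j → Ac n z j) (θi : Ty n d i) : ℝ :=
  ∫ t, u a (rivalsAct n d z i f t) θi t ∂(cond θi)

/-- First-order condition for a maximizer over a convex set: if `b` maximizes `g`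
over a convex set `S` and `g` has gradient `G` at `b`, then `⟪G, x - b⟫ ≤ 0`
for all `x ∈ S`. -/
lemma foc_aux {E : Type*} [NormedAddCommGroup E] [InnerProductSpace ℝ E] [CompleteSpace E]
    {S : Set E} (hS : Convex ℝ S) {g : E → ℝ} {b G : E}
    (hg : HasGradientAt g G b) (hb : b ∈ S)
    (hmax : ∀ x ∈ S, g x ≤ g b) : ∀ x ∈ S, ⟪G, x - b⟫_ℝ ≤ 0 := by
  intro x hx
  set v := x - b with hv
  have hline : ∀ s : ℝ, s ∈ Set.Icc (0:ℝ) 1 → b + s • v ∈ S := by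
    intro s hs
    have hmem := hS hb hx (by linarith [hs.2] : (0:ℝ) ≤ 1 - s) hs.1 (by ring)
    have heq : (1 - s) • b + s • x = b + s • v := by
      rw [hv, sub_smul, one_smul, smul_sub]; abel
    rwa [heq] at hmem
  have h1 : HasDerivAt (fun s : ℝ => b + s • v) v 0 := by
    simpa using ((hasDerivAt_id (0:ℝ)).smul_const v).const_add b
  have h0 : b + (0:ℝ) • v = b := by simp
  have hF : HasFDerivAt g (InnerProductSpace.toDual ℝ E G) (b + (0:ℝ) • v) := by
    rw [h0]; exact hg.hasFDerivAt
  have hderiv : HasDerivAt (fun s : ℝ => g (b + s • v)) ⟪G, v⟫_ℝ 0 := by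
    have := hF.comp_hasDerivAt (0:ℝ) h1
    simp only [InnerProductSpace.toDual_apply_apply] at this; exact this
  have htend : Filter.Tendsto (slope (fun s : ℝ => g (b + s • v)) 0)
      (nhdsWithin (0:ℝ) (Set.Ioi 0)) (nhds ⟪G, v⟫_ℝ) :=
    (hasDerivAt_iff_tendsto_slope.mp hderiv).mono_left
      (nhdsWithin_mono _ (fun s hs => ne_of_gt hs))
  refine le_of_tendsto htend ?_
  filter_upwards [Ioo_mem_nhdsGT_of_mem (Set.mem_Ico.mpr ⟨le_refl _, zero_lt_one⟩)]
    with s hs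
  have hsle : g (b + s • v) ≤ g (b + (0:ℝ) • v) := by
    rw [h0]; exact hmax _ (hline s ⟨hs.1.le, hs.2.le⟩)
  have : slope (fun s : ℝ => g (b + s • v)) 0 s
      = (g (b + s • v) - g (b + (0:ℝ) • v)) / s := by
    rw [slope_def_field, sub_zero]
  rw [this]
  exact div_nonpos_of_nonpos_of_nonneg (by linarith) hs.1.le

/-- **Theorem 3.1 (own-type part): the optimal response is single-valued and
Lipschitz in the own type.**  Under Assumptions 3.1, 3.2 and the conclusion of
Proposition 3.1 (`∇_{a_i}ϑ_i(a_i, f_{-i}, ·)` is `κ_i`-Lipschitz on `Θ_i`,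
uniformly in `a_i` and `f_{-i}`), the optimal response
`𝒜*_i(f_{-i}, θ_i) = argmax_{a_i ∈ 𝒜_i} ϑ_i(a_i, f_{-i}, θ_i)` is a singleton and
is `(κ_i/σ_i)`-Lipschitz in `θ_i` on `Θ_i`. -/
theorem stmt_1
    (n : ℕ) (d z : Fin n → ℕ) (i : Fin n)
    (Θ : ∀ j, Set (Ty n d j)) (𝒜 : ∀ j, Set (Ac n z j))
    (hΘ : ∀ j, (Θ j).Nonempty ∧ IsCompact (Θ j) ∧ Convex ℝ (Θ j))
    (h𝒜 : ∀ j, (𝒜 j).Nonempty ∧ IsCompact (𝒜 j) ∧ Convex ℝ (𝒜 j))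
    (cond : Ty n d i → Measure (Rv n d i))
    (hprob : ∀ θi, IsProbabilityMeasure (cond θi))
    (u : Ac n z i → RvA n z i → Ty n d i → Rv n d i → ℝ)
    -- Assumption 3.1(a)
    (hC1 : ContDiff ℝ 1 (fun p : Ac n z i × RvA n z i × Ty n d i × Rv n d i =>
      u p.1 p.2.1 p.2.2.1 p.2.2.2))
    -- Assumption 3.1(b): local integrable domination of `∇_{a_i}u_i`
    (hdom : ∀ f : ∀ j, Ty n d j → Ac n z j, IsStrat n d z Θ 𝒜 f →
      ∀ θi ∈ Θ i, ∀ ahat ∈ 𝒜 i, ∃ U : Set (Ac n z i), U ⊆ 𝒜 i ∧ IsClosed U ∧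
        U ∈ nhdsWithin ahat (𝒜 i) ∧ ∃ h : Rv n d i → ℝ, (∀ t, 0 ≤ h t) ∧
          Integrable h (cond θi) ∧ ∀ a ∈ U, ∀ t : Rv n d i,
            ‖gradient (fun b => u b (rivalsAct n d z i f t) θi t) a‖ ≤ h t)
    -- Assumption 3.1(b): differentiation under the integral sign
    (hexch : ∀ f : ∀ j, Ty n d j → Ac n z j, IsStrat n d z Θ 𝒜 f →
      ∀ θi ∈ Θ i, ∀ a : Ac n z i,
        Integrable (fun t => gradient (fun b => u b (rivalsAct n d z i f t) θi t) a)
          (cond θi) ∧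
        HasGradientAt (fun b => vth n d z i u cond b f θi)
          (∫ t, gradient (fun b => u b (rivalsAct n d z i f t) θi t) a ∂(cond θi)) a)
    -- Assumption 3.2(a): `σ_i`-strong concavity of `u_i` in `a_i`
    (σ : ℝ) (hσ : 0 < σ)
    (hconc : ∀ (ar : RvA n z i) (θi : Ty n d i) (t : Rv n d i),
      ∀ a' ∈ 𝒜 i, ∀ a'' ∈ 𝒜 i,
      ⟪gradient (fun b => u b ar θi t) a' - gradient (fun b => u b ar θi t) a'',
        a' - a''⟫_ℝ ≤ -σ * ‖a' - a''‖ ^ 2)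
    -- Assumption 3.2(b): blockwise Lipschitz continuity in rivals' actions
    (τ : Fin n → ℝ)
    (hτ : ∀ (ai : Ac n z i) (θi : Ty n d i) (t : Rv n d i),
      ∀ ar' ar'' : RvA n z i, (∀ j, ar' j ∈ 𝒜 j.val) → (∀ j, ar'' j ∈ 𝒜 j.val) →
      ‖gradient (fun b => u b ar' θi t) ai - gradient (fun b => u b ar'' θi t) ai‖ ≤
        ∑ j : {j : Fin n // j ≠ i}, τ j.val * ‖ar' j - ar'' j‖)
    -- conclusion of Proposition 3.1: `∇_{a_i}ϑ_i` is `κ_i`-Lipschitz in `θ_i`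
    (κ : ℝ)
    (hκ : ∀ f : ∀ j, Ty n d j → Ac n z j, IsStrat n d z Θ 𝒜 f →
      ∀ ai ∈ 𝒜 i, ∀ θ' ∈ Θ i, ∀ θ'' ∈ Θ i,
      ‖gradient (fun b => vth n d z i u cond b f θ') ai -
        gradient (fun b => vth n d z i u cond b f θ'') ai‖ ≤ κ * ‖θ' - θ''‖) :
    ∀ f : ∀ j, Ty n d j → Ac n z j, IsStrat n d z Θ 𝒜 f →
      -- the optimal response is a singleton …
      (∀ θi ∈ Θ i, ∃! b : Ac n z i, b ∈ 𝒜 i ∧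
        ∀ x ∈ 𝒜 i, vth n d z i u cond x f θi ≤ vth n d z i u cond b f θi) ∧
      -- … and is `(κ/σ)`-Lipschitz in the own type
      (∀ θ' ∈ Θ i, ∀ θ'' ∈ Θ i, ∀ b' b'' : Ac n z i,
        (b' ∈ 𝒜 i ∧ ∀ x ∈ 𝒜 i, vth n d z i u cond x f θ' ≤ vth n d z i u cond b' f θ') →
        (b'' ∈ 𝒜 i ∧ ∀ x ∈ 𝒜 i, vth n d z i u cond x f θ'' ≤ vth n d z i u cond b'' f θ'') →
        ‖b' - b''‖ ≤ (κ / σ) * ‖θ' - θ''‖) := by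
  intro f hf
  obtain ⟨⟨a0, ha0⟩, hAcomp, hAconv⟩ := h𝒜 i
  -- the gradient of ϑ equals the integral of the pointwise gradient
  have hgradeq : ∀ θi ∈ Θ i, ∀ a : Ac n z i,
      gradient (fun b => vth n d z i u cond b f θi) a
        = ∫ t, gradient (fun b => u b (rivalsAct n d z i f t) θi t) a ∂(cond θi) :=
    fun θi hθ a => ((hexch f hf θi hθ a).2).gradient
  -- strong monotonicity of the (negative) gradient of ϑ
  have hmono : ∀ θi ∈ Θ i, ∀ a' ∈ 𝒜 i, ∀ a'' ∈ 𝒜 i,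
      ⟪gradient (fun b => vth n d z i u cond b f θi) a'
        - gradient (fun b => vth n d z i u cond b f θi) a'', a' - a''⟫_ℝ
        ≤ -σ * ‖a' - a''‖ ^ 2 := by
    intro θi hθ a' ha' a'' ha''
    haveI := hprob θi
    have h1 := (hexch f hf θi hθ a').1
    have h2 := (hexch f hf θi hθ a'').1
    have hii := integral_inner (𝕜 := ℝ) (h1.sub h2) (a' - a'')
    simp only [Pi.sub_apply] at hii
    rw [hgradeq θi hθ a', hgradeq θi hθ a'', ← integral_sub h1 h2,
      real_inner_comm, ← hii]
    calc ∫ t, ⟪a' - a'', gradient (fun b => u b (rivalsAct n d z i f t) θi t) a'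
          - gradient (fun b => u b (rivalsAct n d z i f t) θi t) a''⟫_ℝ ∂(cond θi)
        ≤ ∫ _t, (-σ * ‖a' - a''‖ ^ 2) ∂(cond θi) := by
          refine integral_mono ((h1.sub h2).const_inner _) (integrable_const _) ?_
          intro t
          dsimp only
          rw [real_inner_comm]
          exact hconc (rivalsAct n d z i f t) θi t a' ha' a'' ha''
      _ = -σ * ‖a' - a''‖ ^ 2 := by simp
  -- ϑ is continuous in a_i
  have hcont : ∀ θi ∈ Θ i, Continuous (fun b => vth n d z i u cond b f θi) :=
    fun θi hθ => continuous_iff_continuousAt.mpr fun a =>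
      ((hexch f hf θi hθ a).2).differentiableAt.continuousAt
  -- the key inequality between two maximizers for two own types
  have key : ∀ θ' ∈ Θ i, ∀ θ'' ∈ Θ i, ∀ b' b'' : Ac n z i,
      (b' ∈ 𝒜 i ∧ ∀ x ∈ 𝒜 i, vth n d z i u cond x f θ' ≤ vth n d z i u cond b' f θ') →
      (b'' ∈ 𝒜 i ∧ ∀ x ∈ 𝒜 i, vth n d z i u cond x f θ'' ≤ vth n d z i u cond b'' f θ'') →
      σ * ‖b' - b''‖ ^ 2 ≤ κ * ‖θ' - θ''‖ * ‖b' - b''‖ := by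
    intro θ' hθ' θ'' hθ'' b' b'' hb' hb''
    obtain ⟨hb'A, hb'max⟩ := hb'
    obtain ⟨hb''A, hb''max⟩ := hb''
    set p := gradient (fun b => vth n d z i u cond b f θ') b' with hp
    set q := gradient (fun b => vth n d z i u cond b f θ') b'' with hq
    set r := gradient (fun b => vth n d z i u cond b f θ'') b'' with hr
    set v := b' - b'' with hv
    have foc1 : ⟪p, b'' - b'⟫_ℝ ≤ 0 := by
      rw [hp, hgradeq θ' hθ' b']
      exact foc_aux hAconv (hexch f hf θ' hθ' b').2 hb'A hb'max b'' hb''A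
    have foc2 : ⟪r, v⟫_ℝ ≤ 0 := by
      rw [hr, hgradeq θ'' hθ'' b'', hv]
      exact foc_aux hAconv (hexch f hf θ'' hθ'' b'').2 hb''A hb''max b' hb'A
    have hm : ⟪p - q, v⟫_ℝ ≤ -σ * ‖v‖ ^ 2 := hmono θ' hθ' b' hb'A b'' hb''A
    have hcs : ⟪q - r, v⟫_ℝ ≤ κ * ‖θ' - θ''‖ * ‖v‖ := by
      calc ⟪q - r, v⟫_ℝ ≤ ‖q - r‖ * ‖v‖ := real_inner_le_norm _ _
        _ ≤ κ * ‖θ' - θ''‖ * ‖v‖ :=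
            mul_le_mul_of_nonneg_right
              (hκ f hf b'' hb''A θ' hθ' θ'' hθ'') (norm_nonneg _)
    have e1 : ⟪p - q, v⟫_ℝ = ⟪p, v⟫_ℝ - ⟪q, v⟫_ℝ := inner_sub_left _ _ _
    have e2 : ⟪q - r, v⟫_ℝ = ⟪q, v⟫_ℝ - ⟪r, v⟫_ℝ := inner_sub_left _ _ _
    have e3 : ⟪p, b'' - b'⟫_ℝ = -⟪p, v⟫_ℝ := by
      rw [hv, ← inner_neg_right, neg_sub]
    linarith
  -- nonnegativity helper : 0 ≤ κ * ‖θ' - θ''‖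
  have hκnn : ∀ θ' ∈ Θ i, ∀ θ'' ∈ Θ i, 0 ≤ κ * ‖θ' - θ''‖ := fun θ' hθ' θ'' hθ'' =>
    le_trans (norm_nonneg _) (hκ f hf a0 ha0 θ' hθ' θ'' hθ'')
  constructor
  · -- existence and uniqueness of the maximizer
    intro θi hθ
    obtain ⟨b, hbA, hbmax⟩ := hAcomp.exists_isMaxOn ⟨a0, ha0⟩ (hcont θi hθ).continuousOn
    refine ⟨b, ⟨hbA, fun x hx => hbmax hx⟩, ?_⟩
    rintro b' ⟨hb'A, hb'max⟩
    have hk := key θi hθ θi hθ b' b ⟨hb'A, hb'max⟩ ⟨hbA, fun x hx => hbmax hx⟩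
    simp only [sub_self, norm_zero, mul_zero, zero_mul] at hk
    have hnz : ‖b' - b‖ = 0 := by
      by_contra hne
      have hpos : 0 < ‖b' - b‖ := lt_of_le_of_ne (norm_nonneg _) (Ne.symm hne)
      nlinarith [mul_pos (mul_pos hσ hpos) hpos]
    rw [← sub_eq_zero]
    exact norm_eq_zero.mp hnz
  · -- Lipschitz continuity in the own type
    rintro θ' hθ' θ'' hθ'' b' b'' hb' hb''
    have hk := key θ' hθ' θ'' hθ'' b' b'' hb' hb''
    rw [div_mul_eq_mul_div, le_div_iff₀ hσ]
    rcases eq_or_lt_of_le (norm_nonneg (b' - b'')) with h0 | hpos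
    · rw [← h0, zero_mul]
      exact hκnn θ' hθ' θ'' hθ''
    · nlinarith [hk, hpos]
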